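/- Let N ≥ 2. For every a ∈ ℝ^{N−1} and b ∈ ℝ with b + |a|²/4 ≥ 0, the N-dimensional Lebesgue volume of the region cut from the interior of the paraboloid by the hyperplane x_N = ⟨a, x'⟩ + b, namely {(x', x_N) ∈ ℝ^{N−1} × ℝ : |x'|² ≤ x_N ≤ ⟨a, x'⟩ + b}, equals (2·v_{N−1}/(N+1)) · (b + |a|²/4)^{(N+1)/2}. -/

import Mathlib

open MeasureTheory
open scoped RealInnerProductSpace

/-- The Lebesgue volume of the unit ball in `ℝᵖ`. -/
noncomputable def unitBallVol (p : ℕ) : ℝ :=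
  (volume (Metric.closedBall (0 : EuclideanSpace ℝ (Fin p)) 1)).toReal

open Set Metric in
lemma aux_vol (n : ℕ) (hn : 1 ≤ n) (a : EuclideanSpace ℝ (Fin n)) (b : ℝ)
    (h : 0 ≤ b + ‖a‖ ^ 2 / 4) :
    (volume {p : EuclideanSpace ℝ (Fin n) × ℝ |
        ‖p.1‖ ^ 2 ≤ p.2 ∧ p.2 ≤ ⟪a, p.1⟫ + b}).toReal
      = (2 * (volume (closedBall (0 : EuclideanSpace ℝ (Fin n)) 1)).toReal / (n + 2))
         * Real.sqrt (b + ‖a‖ ^ 2 / 4) ^ (n + 2) := by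
  haveI : Nontrivial (EuclideanSpace ℝ (Fin n)) :=
    ⟨⟨EuclideanSpace.single ⟨0, hn⟩ 1, 0, fun hcon => by
      simpa using congrArg (fun x : EuclideanSpace ℝ (Fin n) => x ⟨0, hn⟩) hcon⟩⟩
  set R : ℝ := Real.sqrt (b + ‖a‖ ^ 2 / 4) with hRdef
  have hR0 : 0 ≤ R := Real.sqrt_nonneg _
  have hR2 : R ^ 2 = b + ‖a‖ ^ 2 / 4 := Real.sq_sqrt h
  set c : EuclideanSpace ℝ (Fin n) := (2 : ℝ)⁻¹ • a with hc
  have key : ∀ y : EuclideanSpace ℝ (Fin n),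
      ⟪a, y⟫ + b - ‖y‖ ^ 2 = R ^ 2 - ‖y - c‖ ^ 2 := by
    intro y
    have h1 : ‖y - c‖ ^ 2 = ‖y‖ ^ 2 - 2 * ⟪y, c⟫ + ‖c‖ ^ 2 := norm_sub_sq_real y c
    have h2 : ⟪y, c⟫ = 2⁻¹ * ⟪a, y⟫ := by
      rw [hc, real_inner_smul_right, real_inner_comm]
    have h3 : ‖c‖ ^ 2 = ‖a‖ ^ 2 / 4 := by
      rw [hc, norm_smul]; simp; ring
    rw [h1, h2, h3, hR2]; ring
  set g : ℝ → ℝ := fun r => max (R ^ 2 - r ^ 2) 0 with hg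
  have hgcont : Continuous g := (continuous_const.sub (continuous_pow 2)).max continuous_const
  have hgz : ∀ r : ℝ, R < r → g r = 0 := by
    intro r hr
    simp only [hg, max_eq_right_iff, sub_nonpos]
    exact pow_le_pow_left₀ hR0 hr.le 2
  have hof : ∀ t : ℝ, ENNReal.ofReal (max t 0) = ENNReal.ofReal t := by
    intro t
    rcases le_total t 0 with ht | ht
    · simp [max_eq_right ht, ENNReal.ofReal_of_nonpos ht]
    · simp [max_eq_left ht]
  set S : Set (EuclideanSpace ℝ (Fin n) × ℝ) :=
    {p | ‖p.1‖ ^ 2 ≤ p.2 ∧ p.2 ≤ ⟪a, p.1⟫ + b} with hS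
  have hSmeas : MeasurableSet S := by
    apply MeasurableSet.inter
    · exact measurableSet_le (measurable_fst.norm.pow measurable_const) measurable_snd
    · exact measurableSet_le measurable_snd
        ((measurable_const.inner measurable_fst).add measurable_const)
  have hvol : volume S = ∫⁻ y : EuclideanSpace ℝ (Fin n), ENNReal.ofReal (g ‖y - c‖) := by
    rw [show (volume : Measure (EuclideanSpace ℝ (Fin n) × ℝ))
        = (volume : Measure (EuclideanSpace ℝ (Fin n))).prod volume from rfl,
      Measure.prod_apply hSmeas]
    congr 1
    ext y
    have hpre : Prod.mk y ⁻¹' S = Icc (‖y‖ ^ 2) (⟪a, y⟫ + b) := rfl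
    rw [hpre, Real.volume_Icc]
    have : g ‖y - c‖ = max (⟪a, y⟫ + b - ‖y‖ ^ 2) 0 := by
      simp only [hg]; rw [key y]
    rw [this, hof]
  have htrans : (∫⁻ y : EuclideanSpace ℝ (Fin n), ENNReal.ofReal (g ‖y - c‖))
      = ∫⁻ y : EuclideanSpace ℝ (Fin n), ENNReal.ofReal (g ‖y‖) := by
    simpa [sub_eq_add_neg] using
      lintegral_add_right_eq_self
        (fun y : EuclideanSpace ℝ (Fin n) => ENNReal.ofReal (g ‖y‖)) (-c)
  have hint : Integrable (fun y : EuclideanSpace ℝ (Fin n) => g ‖y‖) := by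
    apply Continuous.integrable_of_hasCompactSupport (hgcont.comp continuous_norm)
    apply HasCompactSupport.intro (isCompact_closedBall (0 : EuclideanSpace ℝ (Fin n)) R)
    intro y hy
    simp only [mem_closedBall, dist_zero_right, not_le] at hy
    exact hgz _ hy
  have hBochner : (∫⁻ y : EuclideanSpace ℝ (Fin n), ENNReal.ofReal (g ‖y‖))
      = ENNReal.ofReal (∫ y : EuclideanSpace ℝ (Fin n), g ‖y‖) := by
    rw [← ofReal_integral_eq_lintegral_ofReal hint]
    exact Filter.Eventually.of_forall fun y => le_max_right _ _
  have hpolar : (∫ y : EuclideanSpace ℝ (Fin n), g ‖y‖) =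
      n • (volume (ball (0 : EuclideanSpace ℝ (Fin n)) 1)).toReal •
        ∫ r in Ioi (0 : ℝ), r ^ (n - 1) • g r := by
    have := integral_fun_norm_addHaar (volume : Measure (EuclideanSpace ℝ (Fin n))) g
    rwa [finrank_euclideanSpace_fin] at this
  have hradial : (∫ r in Ioi (0 : ℝ), r ^ (n - 1) • g r)
      = R ^ 2 * (R ^ n / n) - R ^ (n + 2) / (n + 2) := by
    rw [setIntegral_eq_of_subset_of_forall_diff_eq_zero measurableSet_Ioi
      (Ioc_subset_Ioi_self) (fun r hr => by
        have : R < r := by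
          rcases hr with ⟨h1, h2⟩
          simp only [mem_Ioc, not_and, not_le] at h2
          exact h2 (mem_Ioi.mp h1)
        rw [hgz r this, smul_zero])]
    have hcongr : (∫ r in Ioc (0 : ℝ) R, r ^ (n - 1) • g r)
        = ∫ r in Ioc (0 : ℝ) R, (R ^ 2 * r ^ (n - 1) - r ^ (n + 1)) := by
      apply setIntegral_congr_fun measurableSet_Ioc
      intro r hr
      show r ^ (n - 1) • g r = R ^ 2 * r ^ (n - 1) - r ^ (n + 1)
      have hr2 : r ^ 2 ≤ R ^ 2 := pow_le_pow_left₀ hr.1.le hr.2 2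
      have hgr : g r = R ^ 2 - r ^ 2 := by
        simp only [hg, max_eq_left_iff, sub_nonneg]; exact hr2
      have hpow : r ^ (n - 1) * r ^ 2 = r ^ (n + 1) := by
        rw [← pow_add]; congr 1; omega
      rw [hgr, smul_eq_mul]
      nlinarith [hpow]
    rw [hcongr, ← intervalIntegral.integral_of_le hR0,
      intervalIntegral.integral_sub ((intervalIntegral.intervalIntegrable_pow _).const_mul _)
        (intervalIntegral.intervalIntegrable_pow _),
      intervalIntegral.integral_const_mul, integral_pow, integral_pow]
    have h1 : n - 1 + 1 = n := by omega
    rw [h1, zero_pow (by omega : n ≠ 0), zero_pow (by omega : n + 1 + 1 ≠ 0)]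
    push_cast [Nat.cast_sub hn]
    ring
  have hIval : (∫ y : EuclideanSpace ℝ (Fin n), g ‖y‖)
      = (2 * (volume (closedBall (0 : EuclideanSpace ℝ (Fin n)) 1)).toReal / (n + 2))
         * R ^ (n + 2) := by
    rw [hpolar, hradial,
      ← Measure.addHaar_closedBall_eq_addHaar_ball (volume : Measure (EuclideanSpace ℝ (Fin n))) 0 1]
    have hn0 : (n : ℝ) ≠ 0 := Nat.cast_ne_zero.mpr (by omega)
    have hn2 : (n : ℝ) + 2 ≠ 0 := by positivity
    have hpow2 : R ^ 2 * (R ^ n / (n : ℝ)) = R ^ (n + 2) / n := by rw [pow_add]; ring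
    rw [nsmul_eq_mul, smul_eq_mul, hpow2]
    field_simp
    ring
  rw [hvol, htrans, hBochner, hIval, ENNReal.toReal_ofReal]
  positivity

/-- Let `N ≥ 2`.  For every `a ∈ ℝ^{N−1}` and `b ∈ ℝ` with
`b + |a|²/4 ≥ 0`, the volume of the region cut from the interior of the paraboloid
`x_N = |x'|²` by the hyperplane `x_N = ⟨a,x'⟩ + b`, namely
`{(x', x_N) : |x'|² ≤ x_N ≤ ⟨a,x'⟩ + b}`, equals
`(2·v_{N−1}/(N+1))·(b + |a|²/4)^{(N+1)/2}`. -/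
theorem volume_paraboloid_cut (N : ℕ) (hN : 2 ≤ N)
    (a : EuclideanSpace ℝ (Fin (N - 1))) (b : ℝ) (h : 0 ≤ b + ‖a‖ ^ 2 / 4) :
    (volume {p : EuclideanSpace ℝ (Fin (N - 1)) × ℝ |
        ‖p.1‖ ^ 2 ≤ p.2 ∧ p.2 ≤ ⟪a, p.1⟫ + b}).toReal =
      (2 * unitBallVol (N - 1) / (N + 1)) * (b + ‖a‖ ^ 2 / 4) ^ (((N : ℝ) + 1) / 2) := by
  have key := aux_vol (N - 1) (by omega) a b h
  have hc1 : ((N - 1 : ℕ) : ℝ) + 2 = (N : ℝ) + 1 := by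
    rw [Nat.cast_sub (by omega)]; push_cast; ring
  have hc2 : (N - 1) + 2 = N + 1 := by omega
  have hc3 : (b + ‖a‖ ^ 2 / 4) ^ (((N : ℝ) + 1) / 2)
      = Real.sqrt (b + ‖a‖ ^ 2 / 4) ^ (N + 1) := by
    rw [Real.sqrt_eq_rpow, ← Real.rpow_natCast _ (N + 1), ← Real.rpow_mul h]
    congr 1
    push_cast
    ring
  rw [unitBallVol, hc3, ← hc1, ← hc2, key]
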